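/- For all nonnegative integers m and n, Σ_{k=0}^{m} (−1)^k k q^{binom(k+1,2)} [m+n+1 choose n+k+1]_q + Σ_{k=1}^{n+1} (−1)^{k−1} k q^{binom(k,2)} [m+n+1 choose n−k+1]_q = (q;q)_m (q;q)_n, as polynomials in q. -/

import Mathlib

open Finset

/-- The q-shifted factorial `(q;q)_r = ∏_{i=1}^r (1 - q^i)` in `ℚ(q)`. -/
noncomputable def qPoch (r : ℕ) : RatFunc ℚ :=
  ∏ i ∈ Finset.range r, (1 - (RatFunc.X : RatFunc ℚ) ^ (i + 1))

/-- The Gaussian binomial coefficient `[a choose b]_q`, zero outside `0 ≤ b ≤ a`. -/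
noncomputable def qbinom (a : ℕ) (b : ℤ) : RatFunc ℚ :=
  if 0 ≤ b ∧ b ≤ (a : ℤ) then qPoch a / (qPoch b.toNat * qPoch (a - b.toNat)) else 0

lemma one_sub_X_pow_ne_zero (i : ℕ) (hi : i ≠ 0) : (1 : RatFunc ℚ) - RatFunc.X ^ i ≠ 0 := by
  intro h
  have hx : (RatFunc.X : RatFunc ℚ) ^ i = 1 := by linear_combination -h
  have : (Polynomial.X : Polynomial ℚ) ^ i = 1 := by
    apply RatFunc.algebraMap_injective (K := ℚ)
    simpa [map_pow, RatFunc.algebraMap_X] using hx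
  have := congrArg Polynomial.natDegree this
  simp [Polynomial.natDegree_X_pow] at this
  exact hi this

lemma qPoch_ne_zero (r : ℕ) : qPoch r ≠ 0 := by
  unfold qPoch
  exact Finset.prod_ne_zero_iff.2 fun i _ => one_sub_X_pow_ne_zero (i+1) (by omega)

@[simp] lemma qPoch_zero : qPoch 0 = 1 := by simp [qPoch]

lemma qPoch_succ (r : ℕ) : qPoch (r+1) = qPoch r * (1 - RatFunc.X ^ (r+1)) := by
  simp [qPoch, Finset.prod_range_succ]

@[simp] lemma qbinom_zero (a : ℕ) : qbinom a 0 = 1 := by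
  simp [qbinom]
  exact qPoch_ne_zero a

@[simp] lemma qbinom_self (a : ℕ) : qbinom a a = 1 := by
  simp [qbinom]
  exact qPoch_ne_zero a

lemma qbinom_neg (a : ℕ) (b : ℤ) (h : b < 0) : qbinom a b = 0 := by
  simp [qbinom]; omega

lemma qbinom_gt (a : ℕ) (b : ℤ) (h : (a:ℤ) < b) : qbinom a b = 0 := by
  simp [qbinom]; omega

lemma pascal (a b : ℕ) :
    qbinom (a+1) b = qbinom a b + RatFunc.X ^ (a+1-b) * qbinom a ((b:ℤ)-1) := by
  rcases Nat.eq_zero_or_pos b with hb | hb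
  · subst hb
    simp [qbinom_neg a (-1) (by omega)]
  rcases Nat.lt_or_ge a b with hab | hab
  · rcases Nat.lt_or_ge (a+1) b with hab2 | hab2
    · rw [qbinom_gt (a+1) b (by exact_mod_cast hab2), qbinom_gt a b (by exact_mod_cast hab),
        qbinom_gt a ((b:ℤ)-1) (by omega)]
      ring
    · have hb' : b = a + 1 := by omega
      subst hb'
      rw [show ((a+1:ℕ):ℤ) = ((a+1:ℕ):ℤ) from rfl]
      rw [qbinom_self (a+1), qbinom_gt a ((a+1:ℕ):ℤ) (by push_cast; omega),
        show ((a+1:ℕ):ℤ) - 1 = ((a:ℕ):ℤ) by push_cast; omega, qbinom_self a]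
      simp
  · -- 1 ≤ b ≤ a
    obtain ⟨d, rfl⟩ : ∃ d, b = d + 1 := ⟨b - 1, by omega⟩
    obtain ⟨c, rfl⟩ : ∃ c, a = d + 1 + c := ⟨a - (d+1), by omega⟩
    rw [qbinom, qbinom, qbinom,
      if_pos (by constructor <;> [positivity; (push_cast; omega)]),
      if_pos (by constructor <;> [positivity; (push_cast; omega)]),
      if_pos (by constructor <;> [omega; (push_cast; omega)])]
    have e1 : (((d+1:ℕ)):ℤ).toNat = d + 1 := by simp
    have e2 : (((d+1:ℕ)):ℤ) - 1 = ((d:ℕ):ℤ) := by push_cast; omega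
    rw [e1, e2, Int.toNat_natCast]
    have e3 : d + 1 + c + 1 - (d+1) = c + 1 := by omega
    have e4 : d + 1 + c - (d+1) = c := by omega
    have e5 : d + 1 + c - d = c + 1 := by omega
    rw [e3, e4, e5]
    rw [qPoch_succ (d+1+c), show d+1+c+1 = (d+c+1)+1 by ring, show d+1+c = (d+c)+1 by ring,
      qPoch_succ (d+c), qPoch_succ c, qPoch_succ d]
    rw [show (d+c)+1 = d+1+c by ring]
    have h1 := qPoch_ne_zero d
    have h2 := qPoch_ne_zero c
    have h3 : (1:RatFunc ℚ) - RatFunc.X ^ (d+1) ≠ 0 := one_sub_X_pow_ne_zero _ (by omega)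
    have h4 : (1:RatFunc ℚ) - RatFunc.X ^ (c+1) ≠ 0 := one_sub_X_pow_ne_zero _ (by omega)
    field_simp
    ring

lemma choose_two_succ (j : ℕ) : (j+1).choose 2 = j.choose 2 + j := by
  rw [Nat.choose_succ_succ, Nat.choose_one_right, Nat.add_comm]

lemma cauchy (N : ℕ) (x : RatFunc ℚ) :
    ∑ k ∈ range (N+1), (-1:RatFunc ℚ)^k * RatFunc.X ^ (k.choose 2) * x^k * qbinom N k
      = ∏ i ∈ range N, (1 - RatFunc.X^i * x) := by
  induction N generalizing x with
  | zero => simp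
  | succ N ih =>
    have step : ∀ k ∈ range (N+2), (-1:RatFunc ℚ)^k * RatFunc.X ^ (k.choose 2) * x^k * qbinom (N+1) k
        = (-1:RatFunc ℚ)^k * RatFunc.X^(k.choose 2) * x^k * qbinom N k
          + (-1:RatFunc ℚ)^k * RatFunc.X^(k.choose 2) * x^k * (RatFunc.X^(N+1-k) * qbinom N ((k:ℤ)-1)) := by
      intro k _
      rw [pascal]; ring
    rw [Finset.sum_congr rfl step, Finset.sum_add_distrib]
    have hA : ∑ k ∈ range (N+2), (-1:RatFunc ℚ)^k * RatFunc.X^(k.choose 2) * x^k * qbinom N k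
        = ∏ i ∈ range N, (1 - RatFunc.X^i * x) := by
      rw [Finset.sum_range_succ, qbinom_gt N ((N+1:ℕ):ℤ) (by push_cast; omega), ih x]
      ring
    have hB : ∑ k ∈ range (N+2), (-1:RatFunc ℚ)^k * RatFunc.X^(k.choose 2) * x^k * (RatFunc.X^(N+1-k) * qbinom N ((k:ℤ)-1))
        = -(RatFunc.X^N * x) * ∏ i ∈ range N, (1 - RatFunc.X^i * x) := by
      rw [Finset.sum_range_succ']
      have h0 : (-1:RatFunc ℚ)^0 * RatFunc.X^((0:ℕ).choose 2) * x^0 * (RatFunc.X^(N+1-0) * qbinom N (((0:ℕ):ℤ)-1)) = 0 := by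
        rw [qbinom_neg N _ (by omega)]; ring
      rw [h0, add_zero]
      have step2 : ∀ j ∈ range (N+1),
          (-1:RatFunc ℚ)^(j+1) * RatFunc.X^((j+1).choose 2) * x^(j+1) * (RatFunc.X^(N+1-(j+1)) * qbinom N (((j+1:ℕ):ℤ)-1))
          = (-(RatFunc.X^N * x)) * ((-1:RatFunc ℚ)^j * RatFunc.X^(j.choose 2) * x^j * qbinom N j) := by
        intro j hj
        rw [Finset.mem_range] at hj
        have e1 : ((j+1:ℕ):ℤ) - 1 = (j:ℤ) := by push_cast; omega
        rw [e1, choose_two_succ, show N+1-(j+1) = N-j by omega]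
        have hX : RatFunc.X ^ (j.choose 2 + j) * RatFunc.X ^ (N - j) = (RatFunc.X:RatFunc ℚ) ^ (j.choose 2) * RatFunc.X ^ N := by
          rw [← pow_add, ← pow_add]; congr 1; omega
        linear_combination ((-1:RatFunc ℚ)^(j+1) * x^(j+1) * qbinom N (j:ℤ)) * hX
      rw [Finset.sum_congr rfl step2, ← Finset.mul_sum, ih x]
    rw [hA, hB, Finset.prod_range_succ]
    ring

lemma ch2_add (a b : ℕ) : (a+b).choose 2 = a.choose 2 + b.choose 2 + a*b := by
  induction b with
  | zero => simp
  | succ b ih =>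
    rw [show a+(b+1) = (a+b)+1 by ring, choose_two_succ, ih, choose_two_succ]
    ring

lemma two_ch2 (a : ℕ) : (a.choose 2 : ℤ) * 2 + a = a * a := by
  induction a with
  | zero => simp
  | succ a ih =>
    push_cast [choose_two_succ]
    push_cast at ih
    linear_combination ih

lemma sum_id (n : ℕ) : ∑ i ∈ range n, (i+1) = (n+1).choose 2 := by
  induction n with
  | zero => simp
  | succ n ih => rw [Finset.sum_range_succ, ih, choose_two_succ (n+1)]

/-- The coefficients of the shifted Cauchy polynomial. -/
noncomputable def cjac (m n k : ℕ) : RatFunc ℚ :=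
  (-1:RatFunc ℚ)^(n+1+k) *
    (RatFunc.X:RatFunc ℚ) ^ (((n+1).choose 2 : ℤ) + (k.choose 2 : ℤ) - (n:ℤ)*k) *
      qbinom (m+n+1) k

lemma key_eval (m n : ℕ) (x : RatFunc ℚ) :
    ∑ k ∈ range (m+n+2), cjac m n k * x^k
      = (-1:RatFunc ℚ)^(n+1) * (∏ j ∈ range n, ((RatFunc.X:RatFunc ℚ)^(j+1) - x)) *
          ∏ i ∈ range (m+1), (1 - RatFunc.X^i * x) := by
  have hX : (RatFunc.X : RatFunc ℚ) ≠ 0 := RatFunc.X_ne_zero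
  have step : ∀ k ∈ range (m+n+2), cjac m n k * x^k
      = ((-1:RatFunc ℚ)^(n+1) * RatFunc.X ^ (((n+1).choose 2 : ℤ))) *
        ((-1:RatFunc ℚ)^k * RatFunc.X^(k.choose 2) * (x * RatFunc.X^(-(n:ℤ)))^k *
          qbinom (m+n+1) k) := by
    intro k _
    unfold cjac
    have h1 : (x * (RatFunc.X:RatFunc ℚ)^(-(n:ℤ)))^k = x^k * RatFunc.X^(-((n:ℤ)*k)) := by
      rw [mul_pow]
      congr 1
      rw [← zpow_natCast ((RatFunc.X:RatFunc ℚ)^(-(n:ℤ))) k, ← zpow_mul]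
      ring_nf
    have h2 : (RatFunc.X:RatFunc ℚ) ^ (((n+1).choose 2 : ℤ) + (k.choose 2 : ℤ) - (n:ℤ)*k)
        = RatFunc.X ^ (((n+1).choose 2 : ℤ)) * (RatFunc.X^(k.choose 2) * RatFunc.X^(-((n:ℤ)*k))) := by
      rw [show (((n+1).choose 2 : ℤ) + (k.choose 2 : ℤ) - (n:ℤ)*k)
          = ((n+1).choose 2 : ℤ) + ((k.choose 2 : ℤ) + (-((n:ℤ)*k))) by ring,
        zpow_add₀ hX, zpow_add₀ hX]
      norm_cast
    rw [pow_add (-1:RatFunc ℚ) (n+1) k, h1, h2]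
    ring
  rw [Finset.sum_congr rfl step, ← Finset.mul_sum,
    show m+n+2 = (m+n+1)+1 by ring, cauchy (m+n+1) (x * RatFunc.X^(-(n:ℤ)))]
  rw [show m+n+1 = n+(m+1) by ring, Finset.prod_range_add]
  have hsecond : ∀ i ∈ range (m+1),
      (1 - (RatFunc.X:RatFunc ℚ)^(n+i) * (x * RatFunc.X^(-(n:ℤ)))) = 1 - RatFunc.X^i * x := by
    intro i _
    congr 1
    rw [pow_add, show (RatFunc.X:RatFunc ℚ)^n * RatFunc.X^i * (x * RatFunc.X^(-(n:ℤ)))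
      = (RatFunc.X^n * RatFunc.X^(-(n:ℤ))) * (RatFunc.X^i * x) by ring,
      ← zpow_natCast (RatFunc.X:RatFunc ℚ) n, ← zpow_add₀ hX, add_neg_cancel, zpow_zero, one_mul]
  rw [Finset.prod_congr rfl hsecond]
  have hfirst : (RatFunc.X:RatFunc ℚ) ^ (((n+1).choose 2 : ℤ)) *
      ∏ i ∈ range n, (1 - RatFunc.X^i * (x * RatFunc.X^(-(n:ℤ))))
      = ∏ j ∈ range n, ((RatFunc.X:RatFunc ℚ)^(j+1) - x) := by
    have hXA : (RatFunc.X:RatFunc ℚ) ^ (((n+1).choose 2 : ℤ))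
        = ∏ i ∈ range n, (RatFunc.X:RatFunc ℚ)^(n-i) := by
      rw [Finset.prod_pow_eq_pow_sum, zpow_natCast]
      congr 1
      rw [← sum_id n, ← Finset.sum_range_reflect (fun i => i + 1) n]
      exact Finset.sum_congr rfl fun i hi => by rw [Finset.mem_range] at hi; omega
    rw [hXA, ← Finset.prod_mul_distrib]
    rw [← Finset.prod_range_reflect (fun j => (RatFunc.X:RatFunc ℚ)^(j+1) - x) n]
    refine Finset.prod_congr rfl fun i hi => ?_
    rw [Finset.mem_range] at hi
    rw [mul_sub, mul_one, show n-1-i+1 = n-i by omega]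
    congr 1
    rw [show (RatFunc.X:RatFunc ℚ)^(n-i) * (RatFunc.X^i * (x * RatFunc.X^(-(n:ℤ))))
      = (RatFunc.X^(n-i) * RatFunc.X^i * RatFunc.X^(-(n:ℤ))) * x by ring,
      ← pow_add, show n-i+i = n by omega,
      ← zpow_natCast (RatFunc.X:RatFunc ℚ) n, ← zpow_add₀ hX, add_neg_cancel, zpow_zero, one_mul]
  rw [← mul_assoc, mul_assoc ((-1:RatFunc ℚ)^(n+1)), hfirst, mul_assoc]

lemma prod_Xpow_sub_one (n : ℕ) :
    ∏ j ∈ range n, ((RatFunc.X:RatFunc ℚ)^(j+1) - 1) = (-1:RatFunc ℚ)^n * qPoch n := by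
  induction n with
  | zero => simp
  | succ n ih => rw [Finset.prod_range_succ, ih, qPoch_succ]; ring

lemma sum_k_cjac (m n : ℕ) :
    ∑ k ∈ range (m+n+2), (k : RatFunc ℚ) * cjac m n k = qPoch m * qPoch n := by
  haveI : Infinite (RatFunc ℚ) :=
    Infinite.of_injective _ (RatFunc.algebraMap_injective ℚ)
  set P : Polynomial (RatFunc ℚ) :=
    ∑ k ∈ range (m+n+2), Polynomial.C (cjac m n k) * Polynomial.X ^ k with hP
  set Q : Polynomial (RatFunc ℚ) :=
    Polynomial.C ((-1:RatFunc ℚ)^(n+1)) *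
      (∏ j ∈ range n, (Polynomial.C ((RatFunc.X:RatFunc ℚ)^(j+1)) - Polynomial.X)) *
        ∏ i ∈ range (m+1), (1 - Polynomial.C ((RatFunc.X:RatFunc ℚ)^i) * Polynomial.X) with hQ
  have hPQ : P = Q := by
    apply Polynomial.funext
    intro r
    rw [hP, hQ]
    simp only [Polynomial.eval_finset_sum, Polynomial.eval_mul, Polynomial.eval_C,
      Polynomial.eval_pow, Polynomial.eval_X, Polynomial.eval_prod, Polynomial.eval_sub,
      Polynomial.eval_one]
    exact key_eval m n r
  have hQ2 : Q = (Polynomial.C ((-1:RatFunc ℚ)^(n+1)) *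
      (∏ j ∈ range n, (Polynomial.C ((RatFunc.X:RatFunc ℚ)^(j+1)) - Polynomial.X)) *
        ∏ i ∈ range m, (1 - Polynomial.C ((RatFunc.X:RatFunc ℚ)^(i+1)) * Polynomial.X)) *
      (1 - Polynomial.X) := by
    rw [hQ, Finset.prod_range_succ']
    simp only [pow_zero, map_one, one_mul]
    ring
  have hder := congrArg (fun p => Polynomial.eval 1 (Polynomial.derivative p)) hPQ
  simp only [hQ2] at hder
  rw [hP] at hder
  rw [Polynomial.derivative_sum] at hder
  simp only [Polynomial.derivative_C_mul, Polynomial.derivative_X_pow,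
    Polynomial.eval_finset_sum, Polynomial.eval_mul, Polynomial.eval_C, Polynomial.eval_pow,
    Polynomial.eval_X, one_pow, mul_one] at hder
  rw [Polynomial.derivative_mul] at hder
  simp only [Polynomial.derivative_sub, Polynomial.derivative_one, Polynomial.derivative_X,
    zero_sub, Polynomial.eval_add, Polynomial.eval_mul, Polynomial.eval_sub, Polynomial.eval_one,
    Polynomial.eval_X, Polynomial.eval_neg, sub_self, mul_zero, zero_add, mul_neg, mul_one,
    Polynomial.eval_C, Polynomial.eval_prod, Polynomial.eval_pow] at hder
  rw [prod_Xpow_sub_one] at hder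
  have hqm : ∏ x ∈ range m, (1 - (RatFunc.X:RatFunc ℚ)^(x+1)) = qPoch m := rfl
  rw [hqm] at hder
  have hsign : (-1:RatFunc ℚ)^(n+1) * (-1:RatFunc ℚ)^n = -1 := by
    rw [← pow_add]
    exact Odd.neg_one_pow ⟨n, by ring⟩
  calc ∑ k ∈ range (m+n+2), (k : RatFunc ℚ) * cjac m n k
      = ∑ k ∈ range (m+n+2), cjac m n k * (k : RatFunc ℚ) :=
        Finset.sum_congr rfl fun k _ => by ring
    _ = qPoch m * qPoch n := by
        rw [hder]
        linear_combination (-(qPoch n * qPoch m)) * hsign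

lemma sum_cjac (m n : ℕ) : ∑ k ∈ range (m+n+2), cjac m n k = 0 := by
  have h := key_eval m n 1
  rw [Finset.prod_eq_zero (Finset.mem_range.2 (Nat.succ_pos m)) (by simp)] at h
  simpa using h

lemma expo1 (n j : ℕ) :
    ((n+1).choose 2 : ℤ) + ((n+1+j).choose 2 : ℤ) - (n:ℤ)*(n+1+j) = ((j+1).choose 2 : ℤ) := by
  have h1 : ((n+1+j).choose 2 :ℤ) = ((n+1).choose 2:ℤ) + (j.choose 2:ℤ) + ((n:ℤ)+1)*j := by
    have := ch2_add (n+1) j; push_cast [this]; ring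
  have h2 := two_ch2 (n+1)
  push_cast at h2
  have h3 : ((j+1).choose 2:ℤ) = (j.choose 2:ℤ) + j := by
    have := choose_two_succ j; push_cast [this]; ring
  linear_combination h1 + h2 - h3

lemma expo2 (d j : ℕ) :
    ((d+j+1).choose 2 : ℤ) + (d.choose 2:ℤ) - ((d:ℤ)+j)*d = ((j+1).choose 2 : ℤ) := by
  have h1 : ((d+j+1).choose 2 :ℤ) = (d.choose 2:ℤ) + ((j+1).choose 2:ℤ) + (d:ℤ)*(j+1) := by
    have := ch2_add d (j+1); rw [show d+(j+1) = d+j+1 by ring] at this; push_cast [this]; ring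
  have h2 := two_ch2 d
  linear_combination h1 + h2

lemma sign1 (n j : ℕ) : (-1:RatFunc ℚ)^(n+1+(n+1+j)) = (-1:RatFunc ℚ)^j := by
  rw [show n+1+(n+1+j) = j + 2*(n+1) by ring, pow_add, pow_mul]
  simp

lemma sign2 (d j : ℕ) : (-1:RatFunc ℚ)^(d+j+1+d) = (-1:RatFunc ℚ)^(j+1) := by
  rw [show d+j+1+d = (j+1) + 2*d by ring, pow_add, pow_mul]
  simp

/-- The finite form of Jacobi's identity, split into nonnegative and negative
discrepancy parts (Section 3):
`Σ_{k=0}^{m} (-1)^k k q^{C(k+1,2)} [m+n+1, n+k+1]_q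
 + Σ_{k=1}^{n+1} (-1)^{k-1} k q^{C(k,2)} [m+n+1, n-k+1]_q = (q;q)_m (q;q)_n`. -/
theorem finite_jacobi_split (m n : ℕ) :
    (∑ k ∈ Finset.range (m + 1),
        (-1 : RatFunc ℚ) ^ k * (k : RatFunc ℚ) *
          (RatFunc.X : RatFunc ℚ) ^ (k * (k + 1) / 2) *
            qbinom (m + n + 1) ((n : ℤ) + k + 1)) +
      (∑ k ∈ Finset.Icc 1 (n + 1),
        (-1 : RatFunc ℚ) ^ (k - 1) * (k : RatFunc ℚ) *
          (RatFunc.X : RatFunc ℚ) ^ (k * (k - 1) / 2) *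
            qbinom (m + n + 1) ((n : ℤ) - k + 1)) =
      qPoch m * qPoch n := by
  have key : ∑ k ∈ range (m+n+2), ((k:RatFunc ℚ) - (n+1)) * cjac m n k = qPoch m * qPoch n := by
    have h1 := sum_k_cjac m n
    have h2 := sum_cjac m n
    calc ∑ k ∈ range (m+n+2), ((k:RatFunc ℚ) - (n+1)) * cjac m n k
        = (∑ k ∈ range (m+n+2), (k:RatFunc ℚ) * cjac m n k)
          - (((n:RatFunc ℚ))+1) * ∑ k ∈ range (m+n+2), cjac m n k := by
          rw [Finset.mul_sum, ← Finset.sum_sub_distrib]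
          exact Finset.sum_congr rfl fun k _ => by ring
      _ = qPoch m * qPoch n := by rw [h1, h2]; ring
  rw [show m+n+2 = (n+1) + (m+1) by ring,
    Finset.sum_range_add (fun k => ((k:RatFunc ℚ) - (n+1)) * cjac m n k) (n+1) (m+1)] at key
  have hS1 : ∑ j ∈ range (m+1), (((((n+1)+j:ℕ)):RatFunc ℚ) - (n+1)) * cjac m n ((n+1)+j)
      = ∑ k ∈ Finset.range (m + 1),
        (-1 : RatFunc ℚ) ^ k * (k : RatFunc ℚ) *
          (RatFunc.X : RatFunc ℚ) ^ (k * (k + 1) / 2) *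
            qbinom (m + n + 1) ((n : ℤ) + k + 1) := by
    refine Finset.sum_congr rfl fun j _ => ?_
    unfold cjac
    rw [show (n+1)+j = n+1+j from rfl, sign1 n j]
    rw [show ((n+1).choose 2 : ℤ) + ((n+1+j).choose 2 : ℤ) - (n:ℤ)*((n+1+j:ℕ):ℤ)
        = ((j+1).choose 2 : ℤ) by
      have := expo1 n j; push_cast at this ⊢; linear_combination this, zpow_natCast]
    rw [show j*(j+1)/2 = (j+1).choose 2 by
      rw [Nat.choose_two_right, show j+1-1 = j by omega, Nat.mul_comm]]
    rw [show ((n+1+j:ℕ):ℤ) = (n:ℤ) + j + 1 by push_cast; ring]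
    push_cast
    ring
  have hS2 : ∑ k ∈ range (n+1), (((k:ℕ):RatFunc ℚ) - (n+1)) * cjac m n k
      = ∑ k ∈ Finset.Icc 1 (n + 1),
        (-1 : RatFunc ℚ) ^ (k - 1) * (k : RatFunc ℚ) *
          (RatFunc.X : RatFunc ℚ) ^ (k * (k - 1) / 2) *
            qbinom (m + n + 1) ((n : ℤ) - k + 1) := by
    rw [← Finset.Ico_add_one_right_eq_Icc, Finset.sum_Ico_eq_sum_range]
    rw [show n+1+1-1 = n+1 by omega]
    rw [← Finset.sum_range_reflect (fun k => (((k:ℕ):RatFunc ℚ) - (n+1)) * cjac m n k) (n+1)]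
    refine Finset.sum_congr rfl fun i hi => ?_
    rw [Finset.mem_range] at hi
    obtain ⟨d, rfl⟩ : ∃ d, n = d + i := ⟨n - i, by omega⟩
    rw [show d+i+1-1-i = d by omega, show 1+i = i+1 by omega, show i+1-1 = i by omega]
    unfold cjac
    rw [show d+i+1+d = d+i+1+d from rfl, sign2 d i]
    rw [show (((d+i)+1).choose 2 : ℤ) + ((d:ℕ).choose 2 : ℤ) - ((d+i:ℕ):ℤ)*(d:ℕ)
        = ((i+1).choose 2 : ℤ) by push_cast; exact_mod_cast expo2 d i, zpow_natCast]
    rw [show (i+1)*i/2 = (i+1).choose 2 by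
      rw [Nat.choose_two_right, show i+1-1 = i by omega]]
    rw [show ((d+i:ℕ):ℤ) - ((i+1:ℕ):ℤ) + 1 = ((d:ℕ):ℤ) by push_cast; ring]
    push_cast
    ring
  rw [← hS1, ← hS2, add_comm]
  exact key
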